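/- arXiv:2104.05210 — 3 statements merged into one kernel-verified Lean document; each statement's English description precedes it below -/
import Mathlib

section
/- For every row index n ∈ {1,…,N} and every x ∈ ℝ³, Σ_{m=1}^{M} a_{nm} · Σ_J Δ_J(A) · [∏_{k=1}^{N} (κ_m − κ_{j_k})] · E_J(x) · exp(θ_m(x)) = 0, where the inner sum runs over all N-element index sets J = {j₁ < ⋯ < j_N} ⊆ {1,…,M}. (This is τ(x) times the n-th entry of the row vector φ(x,κ)𝒟, so it expresses the 𝒟-symmetry φ(x,κ)𝒟 = 0 of the Sato eigenfunction.) -/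
open Finset

noncomputable section

/-- `θ_j(x) = κ_j x₁ + κ_j² x₂ + κ_j³ x₃`. -/
def theta {M : ℕ} (κ : Fin M → ℝ) (j : Fin M) (x : Fin 3 → ℝ) : ℝ :=
  κ j * x 0 + κ j ^ 2 * x 1 + κ j ^ 3 * x 2

/-- The increasing enumeration `j₁ < ⋯ < j_N` of an `N`-element index set `s ⊆ {1,…,M}`. -/
def cols {M : ℕ} (N : ℕ) (s : Finset (Fin M)) (h : s.card = N) : Fin N → Fin M :=
  fun i => (s.orderIsoOfFin h i : Fin M)

/-- The Plücker coordinate `Δ_J(A)`: the `N×N` minor of `A` formed by the columns in `J`. -/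
def minor {N M : ℕ} (A : Matrix (Fin N) (Fin M) ℝ) (s : Finset (Fin M))
    (h : s.card = N) : ℝ :=
  (A.submatrix id (cols N s h)).det

/-- `E_J(x) = ∏_{l<m} (κ_{j_m} − κ_{j_l}) · exp(θ_{j₁}(x) + ⋯ + θ_{j_N}(x))`. -/
def EJ {M : ℕ} (N : ℕ) (κ : Fin M → ℝ) (s : Finset (Fin M)) (h : s.card = N)
    (x : Fin 3 → ℝ) : ℝ :=
  (∏ p ∈ Finset.univ.filter (fun p : Fin N × Fin N => p.1 < p.2),
      (κ (cols N s h p.2) - κ (cols N s h p.1))) *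
    Real.exp (∑ j ∈ s, theta κ j x)

/-! ### Auxiliary lemmas -/

lemma prod_pairs {n : ℕ} (f : Fin n → Fin n → ℝ) :
    (∏ p ∈ Finset.univ.filter (fun p : Fin n × Fin n => p.1 < p.2), f p.1 p.2)
      = ∏ i : Fin n, ∏ j ∈ Finset.Ioi i, f i j := by
  rw [Finset.prod_filter, Fintype.prod_prod_type]
  refine Finset.prod_congr rfl fun i _ => ?_
  rw [← Finset.prod_filter]
  congr 1
  ext j
  simp

lemma det_vandermonde_cons {n : ℕ} (c : ℝ) (u : Fin n → ℝ) :
    (Matrix.vandermonde (Fin.cons c u)).det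
      = (∏ i : Fin n, (u i - c)) * (Matrix.vandermonde u).det := by
  rw [Matrix.det_vandermonde, Matrix.det_vandermonde, Fin.prod_univ_succ]
  congr 1
  · rw [Fin.prod_Ioi_zero]
    simp
  · refine Finset.prod_congr rfl fun i _ => ?_
    rw [Fin.prod_Ioi_succ]
    simp

lemma det_vandermonde_repeat {n : ℕ} {v : Fin n → ℝ} {i j : Fin n} (hij : i ≠ j)
    (h : v i = v j) : (Matrix.vandermonde v).det = 0 :=
  Matrix.det_zero_of_row_eq hij (funext fun k => by simp [Matrix.vandermonde, h])

lemma det_vandermonde_comp {n : ℕ} (v : Fin n → ℝ) (σ : Equiv.Perm (Fin n)) :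
    (Matrix.vandermonde (v ∘ σ)).det
      = ((Equiv.Perm.sign σ : ℤ) : ℝ) * (Matrix.vandermonde v).det := by
  have h : Matrix.vandermonde (v ∘ σ) = (Matrix.vandermonde v).submatrix σ id := by
    ext i k
    simp [Matrix.vandermonde]
  rw [h, Matrix.det_permute]

lemma cols_congr {M N : ℕ} {s t : Finset (Fin M)} (hst : s = t) (hs : s.card = N)
    (ht : t.card = N) : cols N s hs = cols N t ht := by subst hst; rfl

lemma cols_injective {M N : ℕ} (s : Finset (Fin M)) (h : s.card = N) :
    Function.Injective (cols N s h) := fun _ _ hab =>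
  (s.orderIsoOfFin h).injective (Subtype.coe_injective hab)

lemma cols_mem {M N : ℕ} (s : Finset (Fin M)) (h : s.card = N) (i : Fin N) :
    cols N s h i ∈ s := (s.orderIsoOfFin h i).2

lemma sum_cols {M N : ℕ} (s : Finset (Fin M)) (h : s.card = N) (f : Fin M → ℝ) :
    ∑ j ∈ s, f j = ∑ k : Fin N, f (cols N s h k) := by
  rw [← Finset.sum_coe_sort s f]
  exact (Equiv.sum_comp (s.orderIsoOfFin h).toEquiv (fun a : {x // x ∈ s} => f a)).symm

/-- Sum of a symmetric function (vanishing on non-injective tuples) over all tuples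
equals `N!` times its sum over increasing enumerations of `N`-element subsets. -/
lemma sum_tuple_eq {M N : ℕ} (F : (Fin N → Fin M) → ℝ)
    (h1 : ∀ (w : Fin N → Fin M) (σ : Equiv.Perm (Fin N)), F (w ∘ σ) = F w)
    (h2 : ∀ w : Fin N → Fin M, ¬ Function.Injective w → F w = 0) :
    ∑ w : Fin N → Fin M, F w
      = (N.factorial : ℝ) * ∑ s : {s : Finset (Fin M) // s.card = N}, F (cols N s.1 s.2) := by
  classical
  have hcard : ∀ w : Fin N → Fin M, Function.Injective w →
      (Finset.image w Finset.univ).card = N := by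
    intro w hw
    rw [Finset.card_image_of_injective _ hw, Finset.card_univ, Fintype.card_fin]
  have key : ∀ (w : Fin N → Fin M) (hw : Function.Injective w),
      ∃ σ : Equiv.Perm (Fin N), cols N (Finset.image w Finset.univ) (hcard w hw) ∘ σ = w := by
    intro w hw
    set s := Finset.image w Finset.univ
    set h := hcard w hw
    have hmem : ∀ i, w i ∈ s := fun i => Finset.mem_image_of_mem w (Finset.mem_univ i)
    set σ0 : Fin N → Fin N := fun i => (s.orderIsoOfFin h).symm ⟨w i, hmem i⟩ with hσ0
    have hσ0inj : Function.Injective σ0 := by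
      intro a b hab
      apply hw
      have := (s.orderIsoOfFin h).symm.injective hab
      exact congrArg Subtype.val this
    refine ⟨Equiv.ofBijective σ0 (Finite.injective_iff_bijective.mp hσ0inj), funext fun i => ?_⟩
    show cols N s h (σ0 i) = w i
    simp [cols, hσ0]
  calc ∑ w : Fin N → Fin M, F w
      = ∑ w ∈ Finset.univ.filter (fun w : Fin N → Fin M => Function.Injective w), F w := by
        refine (Finset.sum_filter_of_ne fun w _ hF => ?_).symm
        by_contra hni
        exact hF (h2 w hni)
    _ = ∑ p : {s : Finset (Fin M) // s.card = N} × Equiv.Perm (Fin N),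
          F (cols N p.1.1 p.1.2 ∘ p.2) := by
        refine (Finset.sum_bij' (fun p _ => cols N p.1.1 p.1.2 ∘ p.2)
          (fun w hw => (⟨Finset.image w Finset.univ,
              hcard w (by simpa using hw)⟩,
            (key w (by simpa using hw)).choose)) ?_ ?_ ?_ ?_ ?_).symm
        · intro p _
          simp only [Finset.mem_filter, Finset.mem_univ, true_and]
          exact (cols_injective p.1.1 p.1.2).comp p.2.injective
        · intro w hw
          exact Finset.mem_univ _
        · intro p _
          have hw : Function.Injective (cols N p.1.1 p.1.2 ∘ p.2) :=
            (cols_injective p.1.1 p.1.2).comp p.2.injective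
          have himg : Finset.image (cols N p.1.1 p.1.2 ∘ p.2) Finset.univ = p.1.1 := by
            refine Finset.eq_of_subset_of_card_le ?_ ?_
            · intro a ha
              rcases Finset.mem_image.mp ha with ⟨i, _, rfl⟩
              exact cols_mem p.1.1 p.1.2 _
            · rw [hcard _ hw, p.1.2]
          have hspec := (key (cols N p.1.1 p.1.2 ∘ p.2) hw).choose_spec
          refine Prod.ext (Subtype.ext himg) ?_
          · refine Equiv.ext fun i => ?_
            apply cols_injective p.1.1 p.1.2
            have hthis := congrFun hspec i
            have hc := congrFun (cols_congr himg (hcard _ hw) p.1.2)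
              ((key _ hw).choose i)
            exact hc.symm.trans hthis
        · intro w hw
          exact (key w (by simpa using hw)).choose_spec
        · intro p _
          rfl
    _ = ∑ s : {s : Finset (Fin M) // s.card = N}, ∑ σ : Equiv.Perm (Fin N),
          F (cols N s.1 s.2) := by
        rw [Fintype.sum_prod_type]
        exact Finset.sum_congr rfl fun s _ => Finset.sum_congr rfl fun σ _ => h1 _ σ
    _ = (N.factorial : ℝ) * ∑ s : {s : Finset (Fin M) // s.card = N}, F (cols N s.1 s.2) := by
        rw [Finset.mul_sum]
        refine Finset.sum_congr rfl fun s _ => ?_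
        rw [Finset.sum_const, Finset.card_univ, Fintype.card_perm, Fintype.card_fin,
          nsmul_eq_mul]

/-- The master summand: `a_{n,W 0} · det(A over columns W∘succ) · detVdm(κ∘W) · e^{Σθ}`. -/
def satoG {N M : ℕ} (κ : Fin M → ℝ) (A : Matrix (Fin N) (Fin M) ℝ) (n : Fin N)
    (x : Fin 3 → ℝ) (W : Fin (N + 1) → Fin M) : ℝ :=
  A n (W 0) * (Matrix.of fun i k => A i (W (Fin.succ k))).det
    * (Matrix.vandermonde (κ ∘ W)).det * Real.exp (∑ i, theta κ (W i) x)

lemma sum_satoG_perm_zero {N M : ℕ} (κ : Fin M → ℝ) (A : Matrix (Fin N) (Fin M) ℝ)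
    (n : Fin N) (x : Fin 3 → ℝ) (W : Fin (N + 1) → Fin M) :
    ∑ p : Fin (N + 1), satoG κ A n x (W ∘ (Fin.cycleRange p).symm) = 0 := by
  set B : Matrix (Fin (N + 1)) (Fin (N + 1)) ℝ :=
    Matrix.of (Fin.cons (fun c => A n (W c)) (fun i c => A i (W c))) with hB
  have hBdet : B.det = 0 := by
    refine Matrix.det_zero_of_row_eq (Fin.succ_ne_zero n).symm (funext fun c => ?_)
    show B 0 c = B n.succ c
    simp [hB, Matrix.of_apply]
  have hexp : ∀ p : Fin (N + 1),
      ∑ i, theta κ ((W ∘ (Fin.cycleRange p).symm) i) x = ∑ i, theta κ (W i) x := by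
    intro p
    exact Equiv.sum_comp (Fin.cycleRange p).symm (fun i => theta κ (W i) x)
  have hvdm : ∀ p : Fin (N + 1),
      (Matrix.vandermonde (κ ∘ (W ∘ (Fin.cycleRange p).symm))).det
        = (-1 : ℝ) ^ (p : ℕ) * (Matrix.vandermonde (κ ∘ W)).det := by
    intro p
    have : κ ∘ (W ∘ (Fin.cycleRange p).symm) = (κ ∘ W) ∘ (Fin.cycleRange p).symm := rfl
    rw [this, det_vandermonde_comp]
    congr 1
    rw [Equiv.Perm.sign_symm, Fin.sign_cycleRange]
    push_cast
    ring
  have hdet : ∀ p : Fin (N + 1),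
      (Matrix.of fun i k => A i ((W ∘ (Fin.cycleRange p).symm) (Fin.succ k))).det
        = (B.submatrix Fin.succ p.succAbove).det := by
    intro p
    congr 1
    ext i k
    simp [hB]
  calc ∑ p : Fin (N + 1), satoG κ A n x (W ∘ (Fin.cycleRange p).symm)
      = ∑ p : Fin (N + 1), ((-1 : ℝ) ^ (p : ℕ) * B 0 p * (B.submatrix Fin.succ p.succAbove).det)
          * ((Matrix.vandermonde (κ ∘ W)).det * Real.exp (∑ i, theta κ (W i) x)) := by
        refine Finset.sum_congr rfl fun p _ => ?_
        rw [satoG, hexp, hvdm, hdet]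
        have h0 : (W ∘ (Fin.cycleRange p).symm) 0 = W p := by
          simp
        rw [h0]
        have hB0 : B 0 p = A n (W p) := by simp [hB]
        rw [hB0]
        ring
    _ = B.det * ((Matrix.vandermonde (κ ∘ W)).det * Real.exp (∑ i, theta κ (W i) x)) := by
        rw [← Finset.sum_mul, ← Matrix.det_succ_row_zero]
    _ = 0 := by rw [hBdet, zero_mul]

lemma sum_satoG_zero {N M : ℕ} (κ : Fin M → ℝ) (A : Matrix (Fin N) (Fin M) ℝ)
    (n : Fin N) (x : Fin 3 → ℝ) :
    ∑ W : Fin (N + 1) → Fin M, satoG κ A n x W = 0 := by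
  have hp : ∀ p : Fin (N + 1),
      ∑ W : Fin (N + 1) → Fin M, satoG κ A n x (W ∘ (Fin.cycleRange p).symm)
        = ∑ W : Fin (N + 1) → Fin M, satoG κ A n x W := by
    intro p
    exact Equiv.sum_comp (Equiv.arrowCongr (Fin.cycleRange p) (Equiv.refl (Fin M)))
      (satoG κ A n x)
  have hmain : ((N : ℝ) + 1) * ∑ W : Fin (N + 1) → Fin M, satoG κ A n x W = 0 := by
    calc ((N : ℝ) + 1) * ∑ W : Fin (N + 1) → Fin M, satoG κ A n x W
        = ∑ p : Fin (N + 1), ∑ W : Fin (N + 1) → Fin M, satoG κ A n x W := by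
          rw [Finset.sum_const, Finset.card_univ, Fintype.card_fin, nsmul_eq_mul]
          push_cast
          ring
      _ = ∑ p : Fin (N + 1), ∑ W : Fin (N + 1) → Fin M,
            satoG κ A n x (W ∘ (Fin.cycleRange p).symm) := by
          exact (Finset.sum_congr rfl fun p _ => (hp p)).symm
      _ = ∑ W : Fin (N + 1) → Fin M, ∑ p : Fin (N + 1),
            satoG κ A n x (W ∘ (Fin.cycleRange p).symm) := Finset.sum_comm
      _ = 0 := by
          rw [Finset.sum_eq_zero]
          intro W _
          exact sum_satoG_perm_zero κ A n x W
  have hne : ((N : ℝ) + 1) ≠ 0 := by positivity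
  exact (mul_eq_zero.mp hmain).resolve_left hne

/-- **`𝒟`-symmetry of the Sato eigenfunction.** For `1 ≤ N < M`,
`κ₁ < ⋯ < κ_M`, a real `N×M` matrix `A`, every row index `n` and every `x ∈ ℝ³`:
`Σ_{m=1}^{M} a_{nm} Σ_J Δ_J(A) [∏_{k=1}^N (κ_m − κ_{j_k})] E_J(x) e^{θ_m(x)} = 0`. -/
theorem sato_D_symmetry (N M : ℕ) (hN : 1 ≤ N) (hNM : N < M)
    (κ : Fin M → ℝ) (hκ : StrictMono κ)
    (A : Matrix (Fin N) (Fin M) ℝ) (n : Fin N) (x : Fin 3 → ℝ) :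
    ∑ m : Fin M, A n m *
      ∑ s : {s : Finset (Fin M) // s.card = N},
        minor A s.1 s.2 * (∏ k : Fin N, (κ m - κ (cols N s.1 s.2 k))) *
          EJ N κ s.1 s.2 x * Real.exp (theta κ m x) = 0 := by
  classical
  -- Step 1: rewrite each summand via `satoG`.
  have hterm : ∀ (m : Fin M) (s : {s : Finset (Fin M) // s.card = N}),
      A n m * (minor A s.1 s.2 * (∏ k : Fin N, (κ m - κ (cols N s.1 s.2 k))) *
          EJ N κ s.1 s.2 x * Real.exp (theta κ m x))
        = (-1 : ℝ) ^ N * satoG κ A n x (Fin.cons m (cols N s.1 s.2)) := by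
    intro m s
    set cs := cols N s.1 s.2 with hcs
    have e1 : (Matrix.of fun i k => A i ((Fin.cons m cs : Fin (N+1) → Fin M) (Fin.succ k))).det
        = minor A s.1 s.2 := by
      rw [minor]
      congr 1
    have e2 : (Matrix.vandermonde (κ ∘ Fin.cons m cs)).det
        = (∏ k : Fin N, (κ (cs k) - κ m)) * (Matrix.vandermonde (κ ∘ cs)).det := by
      rw [Fin.comp_cons, det_vandermonde_cons]
      rfl
    have e3 : (∏ p ∈ Finset.univ.filter (fun p : Fin N × Fin N => p.1 < p.2),
          (κ (cs p.2) - κ (cs p.1))) = (Matrix.vandermonde (κ ∘ cs)).det := by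
      rw [Matrix.det_vandermonde, prod_pairs fun i j => κ (cs j) - κ (cs i)]
      rfl
    have e4 : (∏ k : Fin N, (κ m - κ (cs k)))
        = (-1 : ℝ) ^ N * ∏ k : Fin N, (κ (cs k) - κ m) := by
      calc (∏ k : Fin N, (κ m - κ (cs k)))
          = ∏ k : Fin N, ((-1) * (κ (cs k) - κ m)) := by
            refine Finset.prod_congr rfl fun k _ => ?_
            ring
        _ = (-1 : ℝ) ^ N * ∏ k : Fin N, (κ (cs k) - κ m) := by
            rw [Finset.prod_mul_distrib, Finset.prod_const, Finset.card_univ,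
              Fintype.card_fin]
    have e5 : (∑ i, theta κ ((Fin.cons m cs : Fin (N+1) → Fin M) i) x)
        = theta κ m x + ∑ k : Fin N, theta κ (cs k) x := by
      rw [Fin.sum_univ_succ]
      simp
    have e6 : (∑ j ∈ s.1, theta κ j x) = ∑ k : Fin N, theta κ (cs k) x :=
      sum_cols s.1 s.2 _
    rw [satoG, e1, e2, e5, EJ, e3, e6, e4]
    have hc0 : (Fin.cons m cs : Fin (N+1) → Fin M) 0 = m := rfl
    rw [hc0, Real.exp_add]
    ring
  -- Step 2: reduce to the vanishing of the full tuple sum.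
  -- invariance of the tuple summand under permutations
  have hinv : ∀ (m : Fin M) (w : Fin N → Fin M) (σ : Equiv.Perm (Fin N)),
      satoG κ A n x (Fin.cons m (w ∘ σ)) = satoG κ A n x (Fin.cons m w) := by
    intro m w σ
    have hdet : (Matrix.of fun i k =>
          A i ((Fin.cons m (w ∘ σ) : Fin (N+1) → Fin M) (Fin.succ k))).det
        = ((Equiv.Perm.sign σ : ℤ) : ℝ) *
          (Matrix.of fun i k => A i ((Fin.cons m w : Fin (N+1) → Fin M) (Fin.succ k))).det := by
      have h : (Matrix.of fun i k =>
            A i ((Fin.cons m (w ∘ σ) : Fin (N+1) → Fin M) (Fin.succ k)))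
          = (Matrix.of fun i k =>
            A i ((Fin.cons m w : Fin (N+1) → Fin M) (Fin.succ k))).submatrix id σ := by
        ext i k
        simp [Matrix.submatrix]
      rw [h, Matrix.det_permute']
    have hvdm : (Matrix.vandermonde (κ ∘ Fin.cons m (w ∘ σ))).det
        = ((Equiv.Perm.sign σ : ℤ) : ℝ) * (Matrix.vandermonde (κ ∘ Fin.cons m w)).det := by
      rw [Fin.comp_cons, Fin.comp_cons, det_vandermonde_cons, det_vandermonde_cons]
      have hcomp : κ ∘ (w ∘ σ) = (κ ∘ w) ∘ σ := rfl
      rw [hcomp, det_vandermonde_comp]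
      have hprod : (∏ i : Fin N, (((κ ∘ w) ∘ σ) i - κ m)) = ∏ i : Fin N, ((κ ∘ w) i - κ m) :=
        Equiv.prod_comp σ (fun i => (κ ∘ w) i - κ m)
      rw [hprod]
      ring
    have hexp : (∑ i, theta κ ((Fin.cons m (w ∘ σ) : Fin (N+1) → Fin M) i) x)
        = ∑ i, theta κ ((Fin.cons m w : Fin (N+1) → Fin M) i) x := by
      rw [Fin.sum_univ_succ, Fin.sum_univ_succ]
      congr 1
      simp only [Fin.cons_succ]
      exact Equiv.sum_comp σ (fun k => theta κ (w k) x)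
    have hs2 : ((Equiv.Perm.sign σ : ℤ) : ℝ) * ((Equiv.Perm.sign σ : ℤ) : ℝ) = 1 := by
      rcases Int.units_eq_one_or (Equiv.Perm.sign σ) with h | h <;> rw [h] <;> norm_num
    rw [satoG, satoG, hdet, hvdm, hexp]
    have hc0 : (Fin.cons m (w ∘ σ) : Fin (N+1) → Fin M) 0 = m := rfl
    have hc0' : (Fin.cons m w : Fin (N+1) → Fin M) 0 = m := rfl
    rw [hc0, hc0']
    calc A n m * (((Equiv.Perm.sign σ : ℤ) : ℝ) *
          (Matrix.of fun i k => A i ((Fin.cons m w : Fin (N+1) → Fin M) (Fin.succ k))).det)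
        * (((Equiv.Perm.sign σ : ℤ) : ℝ) * (Matrix.vandermonde (κ ∘ Fin.cons m w)).det)
        * Real.exp (∑ i, theta κ ((Fin.cons m w : Fin (N+1) → Fin M) i) x)
        = (((Equiv.Perm.sign σ : ℤ) : ℝ) * ((Equiv.Perm.sign σ : ℤ) : ℝ)) *
          (A n m *
            (Matrix.of fun i k => A i ((Fin.cons m w : Fin (N+1) → Fin M) (Fin.succ k))).det
            * (Matrix.vandermonde (κ ∘ Fin.cons m w)).det
            * Real.exp (∑ i, theta κ ((Fin.cons m w : Fin (N+1) → Fin M) i) x)) := by ring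
      _ = A n m *
            (Matrix.of fun i k => A i ((Fin.cons m w : Fin (N+1) → Fin M) (Fin.succ k))).det
            * (Matrix.vandermonde (κ ∘ Fin.cons m w)).det
            * Real.exp (∑ i, theta κ ((Fin.cons m w : Fin (N+1) → Fin M) i) x) := by
          rw [hs2, one_mul]
  -- vanishing on non-injective tuples
  have hvan : ∀ (m : Fin M) (w : Fin N → Fin M), ¬ Function.Injective w →
      satoG κ A n x (Fin.cons m w) = 0 := by
    intro m w hw
    rw [Function.Injective] at hw
    push_neg at hw
    obtain ⟨a, b, hab, hne⟩ := hw
    have hv : (Matrix.vandermonde (κ ∘ Fin.cons m w)).det = 0 := by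
      refine det_vandermonde_repeat (i := a.succ) (j := b.succ)
        (fun h => hne (Fin.succ_injective _ h)) ?_
      show κ ((Fin.cons m w : Fin (N+1) → Fin M) a.succ)
        = κ ((Fin.cons m w : Fin (N+1) → Fin M) b.succ)
      rw [Fin.cons_succ, Fin.cons_succ, hab]
    rw [satoG, hv]
    ring
  have hzero : ∑ m : Fin M, ∑ s : {s : Finset (Fin M) // s.card = N},
      satoG κ A n x (Fin.cons m (cols N s.1 s.2)) = 0 := by
    have hfact : (N.factorial : ℝ) ≠ 0 := by
      exact_mod_cast Nat.factorial_ne_zero N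
    have hmul : (N.factorial : ℝ) * (∑ m : Fin M, ∑ s : {s : Finset (Fin M) // s.card = N},
        satoG κ A n x (Fin.cons m (cols N s.1 s.2))) = 0 := by
      calc (N.factorial : ℝ) * (∑ m : Fin M, ∑ s : {s : Finset (Fin M) // s.card = N},
            satoG κ A n x (Fin.cons m (cols N s.1 s.2)))
          = ∑ m : Fin M, (N.factorial : ℝ) * ∑ s : {s : Finset (Fin M) // s.card = N},
              satoG κ A n x (Fin.cons m (cols N s.1 s.2)) := Finset.mul_sum _ _ _
        _ = ∑ m : Fin M, ∑ w : Fin N → Fin M, satoG κ A n x (Fin.cons m w) := by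
            refine Finset.sum_congr rfl fun m _ => ?_
            exact (sum_tuple_eq (fun w => satoG κ A n x (Fin.cons m w))
              (fun w σ => hinv m w σ) (fun w hw => hvan m w hw)).symm
        _ = ∑ p : Fin M × (Fin N → Fin M), satoG κ A n x (Fin.cons p.1 p.2) := by
            rw [Fintype.sum_prod_type]
        _ = ∑ W : Fin (N + 1) → Fin M, satoG κ A n x W :=
            Fintype.sum_equiv (Fin.consEquiv fun _ => Fin M) _ _ (fun p => rfl)
        _ = 0 := sum_satoG_zero κ A n x
    exact (mul_eq_zero.mp hmul).resolve_left hfact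
  calc ∑ m : Fin M, A n m *
      ∑ s : {s : Finset (Fin M) // s.card = N},
        minor A s.1 s.2 * (∏ k : Fin N, (κ m - κ (cols N s.1 s.2 k))) *
          EJ N κ s.1 s.2 x * Real.exp (theta κ m x)
      = ∑ m : Fin M, ∑ s : {s : Finset (Fin M) // s.card = N},
          (-1 : ℝ) ^ N * satoG κ A n x (Fin.cons m (cols N s.1 s.2)) := by
        refine Finset.sum_congr rfl fun m _ => ?_
        rw [Finset.mul_sum]
        exact Finset.sum_congr rfl fun s _ => hterm m s
    _ = (-1 : ℝ) ^ N * ∑ m : Fin M, ∑ s : {s : Finset (Fin M) // s.card = N},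
          satoG κ A n x (Fin.cons m (cols N s.1 s.2)) := by
        rw [Finset.mul_sum]
        refine Finset.sum_congr rfl fun m _ => ?_
        rw [Finset.mul_sum]
    _ = 0 := by rw [hzero, mul_zero]

end
end

section
/- Let 1 ≤ N < M, let κ₁, …, κ_M be nonzero real numbers, let π be an M×M real permutation matrix and d a real N×(M−N) matrix, and set A = (I_N, d)π, 𝒟 = diag(κ₁^N,…,κ_M^N)·Aᵀ and 𝒟′ = (−dᵀ, I_{M−N})·π·diag(κ₁^{−N},…,κ_M^{−N}). Then the N×N matrix 𝒟ᵀ𝒟 and the (M−N)×(M−N) matrix 𝒟′𝒟′ᵀ are invertible, and the M×M matrices P = 𝒟(𝒟ᵀ𝒟)^{−1}𝒟ᵀ and P′ = 𝒟′ᵀ(𝒟′𝒟′ᵀ)^{−1}𝒟′ satisfy P² = P, (P′)² = P′, PP′ = P′P = 0, and P + P′ = I_M. -/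
open Matrix

/-- **orthogonal projectors.** With `1 ≤ N < M = N + K`, nonzero `κ_j`,
a permutation `π`, `A = (I_N, d)π`, `𝒟 = diag(κ^N)Aᵀ` and `𝒟′ = (−dᵀ, I_{M−N})π diag(κ^{−N})`,
the matrices `𝒟ᵀ𝒟` and `𝒟′𝒟′ᵀ` are invertible, and the projectors
`P = 𝒟(𝒟ᵀ𝒟)⁻¹𝒟ᵀ` and `P′ = 𝒟′ᵀ(𝒟′𝒟′ᵀ)⁻¹𝒟′` satisfy
`P² = P`, `P′² = P′`, `PP′ = P′P = 0` and `P + P′ = I_M`. -/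
theorem orthogonal_projectors (N K : ℕ) (hN : 1 ≤ N) (hK : 1 ≤ K)
    (κ : Fin (N + K) → ℝ) (hκ : ∀ j, κ j ≠ 0)
    (π : Equiv.Perm (Fin (N + K))) (d : Matrix (Fin N) (Fin K) ℝ)
    (A : Matrix (Fin N) (Fin (N + K)) ℝ)
    (hA : A = (Matrix.fromCols 1 d).submatrix id (fun j => finSumFinEquiv.symm (π⁻¹ j)))
    (D : Matrix (Fin (N + K)) (Fin N) ℝ)
    (hD : D = Matrix.diagonal (fun j => κ j ^ N) * Aᵀ)
    (D' : Matrix (Fin K) (Fin (N + K)) ℝ)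
    (hD' : D' = (Matrix.fromCols (-dᵀ) 1).submatrix id
        (fun j => finSumFinEquiv.symm (π⁻¹ j)) * Matrix.diagonal (fun j => (κ j)⁻¹ ^ N))
    (P P' : Matrix (Fin (N + K)) (Fin (N + K)) ℝ)
    (hP : P = D * (Dᵀ * D)⁻¹ * Dᵀ)
    (hP' : P' = D'ᵀ * (D' * D'ᵀ)⁻¹ * D') :
    IsUnit (Dᵀ * D) ∧ IsUnit (D' * D'ᵀ) ∧
      P * P = P ∧ P' * P' = P' ∧ P * P' = 0 ∧ P' * P = 0 ∧ P + P' = 1 := by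
  set e : Fin (N + K) ≃ Fin N ⊕ Fin K := (π⁻¹ : Equiv.Perm (Fin (N + K))).trans
    finSumFinEquiv.symm with he_def
  have he : (fun j => finSumFinEquiv.symm (π⁻¹ j)) = ⇑e := rfl
  rw [he] at hA hD'
  -- D' * D = 0
  have hD'D : D' * D = 0 := by
    rw [hD', hD]
    have hdiag : Matrix.diagonal (fun j => (κ j)⁻¹ ^ N) * Matrix.diagonal (fun j => κ j ^ N)
        = 1 := by
      rw [Matrix.diagonal_mul_diagonal]
      have : (fun j => (κ j)⁻¹ ^ N * κ j ^ N) = fun _ : Fin (N + K) => (1 : ℝ) :=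
        funext fun j => by rw [← mul_pow, inv_mul_cancel₀ (hκ j), one_pow]
      rw [this, Matrix.diagonal_one]
    have hassoc : (Matrix.fromCols (-dᵀ) 1).submatrix id ⇑e *
          Matrix.diagonal (fun j => (κ j)⁻¹ ^ N) *
          (Matrix.diagonal (fun j => κ j ^ N) * Aᵀ)
        = (Matrix.fromCols (-dᵀ) 1).submatrix id ⇑e *
          ((Matrix.diagonal (fun j => (κ j)⁻¹ ^ N) *
            Matrix.diagonal (fun j => κ j ^ N)) * Aᵀ) := by
      simp only [Matrix.mul_assoc]
    rw [hassoc, hdiag, Matrix.one_mul, hA,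
      Matrix.transpose_submatrix, Matrix.submatrix_mul_equiv,
      Matrix.transpose_fromCols, Matrix.fromCols_mul_fromRows]
    simp
  have hDtD't : Dᵀ * D'ᵀ = 0 := by
    rw [← Matrix.transpose_mul, hD'D, Matrix.transpose_zero]
  -- kernel of D is trivial
  have hDker : ∀ v : Fin N → ℝ, D *ᵥ v = 0 → v = 0 := by
    intro v hv
    rw [hD, ← Matrix.mulVec_mulVec] at hv
    have hAv : Aᵀ *ᵥ v = 0 := by
      funext j
      have := congrFun hv j
      rw [Matrix.mulVec_diagonal] at this
      have hz : (Aᵀ *ᵥ v) j = 0 := by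
        rcases mul_eq_zero.mp this with h | h
        · exact absurd h (pow_ne_zero _ (hκ j))
        · exact h
      simpa using hz
    funext k
    have := congrFun hAv (e.symm (Sum.inl k))
    rw [hA] at this
    simpa [Matrix.mulVec, dotProduct, Matrix.one_apply, ite_mul,
      Finset.sum_ite_eq'] using this
  -- kernel of D'ᵀ is trivial
  have hD'ker : ∀ w : Fin K → ℝ, D'ᵀ *ᵥ w = 0 → w = 0 := by
    intro w hw
    rw [hD', Matrix.transpose_mul, Matrix.diagonal_transpose, ← Matrix.mulVec_mulVec] at hw
    have hFw : ((Matrix.fromCols (-dᵀ) 1).submatrix id ⇑e)ᵀ *ᵥ w = 0 := by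
      funext j
      have := congrFun hw j
      rw [Matrix.mulVec_diagonal] at this
      rcases mul_eq_zero.mp this with h | h
      · exact absurd h (pow_ne_zero _ (inv_ne_zero (hκ j)))
      · exact h
    funext k
    have := congrFun hFw (e.symm (Sum.inr k))
    simpa [Matrix.mulVec, dotProduct, Matrix.one_apply, ite_mul,
      Finset.sum_ite_eq'] using this
  -- invertibility of Dᵀ * D
  have hunit1 : IsUnit (Dᵀ * D) := by
    rw [← Matrix.mulVec_injective_iff_isUnit]
    intro x y hxy
    have h0 : (Dᵀ * D) *ᵥ (x - y) = 0 := by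
      rw [Matrix.mulVec_sub, hxy, sub_self]
    have hDxy : D *ᵥ (x - y) = 0 := by
      have hdp : (D *ᵥ (x - y)) ⬝ᵥ (D *ᵥ (x - y)) = 0 := by
        have : (x - y) ⬝ᵥ ((Dᵀ * D) *ᵥ (x - y)) = 0 := by rw [h0, dotProduct_zero]
        rwa [← Matrix.mulVec_mulVec, dotProduct_mulVec, Matrix.vecMul_transpose]
          at this
      exact dotProduct_self_eq_zero.mp hdp
    exact sub_eq_zero.mp (hDker _ hDxy)
  -- invertibility of D' * D'ᵀ
  have hunit2 : IsUnit (D' * D'ᵀ) := by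
    rw [← Matrix.mulVec_injective_iff_isUnit]
    intro x y hxy
    have h0 : (D' * D'ᵀ) *ᵥ (x - y) = 0 := by
      rw [Matrix.mulVec_sub, hxy, sub_self]
    have hDxy : D'ᵀ *ᵥ (x - y) = 0 := by
      have hdp : (D'ᵀ *ᵥ (x - y)) ⬝ᵥ (D'ᵀ *ᵥ (x - y)) = 0 := by
        have h1 : (x - y) ⬝ᵥ ((D' * D'ᵀ) *ᵥ (x - y)) = 0 := by rw [h0, dotProduct_zero]
        rw [← Matrix.mulVec_mulVec, dotProduct_mulVec] at h1
        rwa [show (x - y) ᵥ* D' = D'ᵀ *ᵥ (x - y) by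
          rw [← Matrix.transpose_transpose D', Matrix.vecMul_transpose,
            Matrix.transpose_transpose]] at h1
      exact dotProduct_self_eq_zero.mp hdp
    exact sub_eq_zero.mp (hD'ker _ hDxy)
  have hdet1 : IsUnit (Dᵀ * D).det := (Matrix.isUnit_iff_isUnit_det _).mp hunit1
  have hdet2 : IsUnit (D' * D'ᵀ).det := (Matrix.isUnit_iff_isUnit_det _).mp hunit2
  have hinv1 : (Dᵀ * D)⁻¹ * (Dᵀ * D) = 1 := Matrix.nonsing_inv_mul _ hdet1
  have hinv1' : (Dᵀ * D) * (Dᵀ * D)⁻¹ = 1 := Matrix.mul_nonsing_inv _ hdet1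
  have hinv2 : (D' * D'ᵀ)⁻¹ * (D' * D'ᵀ) = 1 := Matrix.nonsing_inv_mul _ hdet2
  have hinv2' : (D' * D'ᵀ) * (D' * D'ᵀ)⁻¹ = 1 := Matrix.mul_nonsing_inv _ hdet2
  -- idempotency
  have hPP : P * P = P := by
    rw [hP]
    calc D * (Dᵀ * D)⁻¹ * Dᵀ * (D * (Dᵀ * D)⁻¹ * Dᵀ)
        = D * (Dᵀ * D)⁻¹ * ((Dᵀ * D) * (Dᵀ * D)⁻¹) * Dᵀ := by
          simp only [Matrix.mul_assoc]
      _ = D * (Dᵀ * D)⁻¹ * Dᵀ := by rw [hinv1', Matrix.mul_one]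
  have hPP' : P' * P' = P' := by
    rw [hP']
    calc D'ᵀ * (D' * D'ᵀ)⁻¹ * D' * (D'ᵀ * (D' * D'ᵀ)⁻¹ * D')
        = D'ᵀ * (D' * D'ᵀ)⁻¹ * ((D' * D'ᵀ) * (D' * D'ᵀ)⁻¹) * D' := by
          simp only [Matrix.mul_assoc]
      _ = D'ᵀ * (D' * D'ᵀ)⁻¹ * D' := by rw [hinv2', Matrix.mul_one]
  have hPPc : P * P' = 0 := by
    rw [hP, hP']
    calc D * (Dᵀ * D)⁻¹ * Dᵀ * (D'ᵀ * (D' * D'ᵀ)⁻¹ * D')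
        = D * (Dᵀ * D)⁻¹ * (Dᵀ * D'ᵀ) * ((D' * D'ᵀ)⁻¹ * D') := by
          simp only [Matrix.mul_assoc]
      _ = 0 := by rw [hDtD't, Matrix.mul_zero, Matrix.zero_mul]
  have hP'Pc : P' * P = 0 := by
    rw [hP, hP']
    calc D'ᵀ * (D' * D'ᵀ)⁻¹ * D' * (D * (Dᵀ * D)⁻¹ * Dᵀ)
        = D'ᵀ * (D' * D'ᵀ)⁻¹ * (D' * D) * ((Dᵀ * D)⁻¹ * Dᵀ) := by
          simp only [Matrix.mul_assoc]
      _ = 0 := by rw [hD'D, Matrix.mul_zero, Matrix.zero_mul]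
  -- sum is identity
  have hsum : P + P' = 1 := by
    have hTS : Matrix.fromRows ((Dᵀ * D)⁻¹ * Dᵀ) ((D' * D'ᵀ)⁻¹ * D') *
        Matrix.fromCols D D'ᵀ = 1 := by
      rw [Matrix.fromRows_mul_fromCols]
      have h11 : (Dᵀ * D)⁻¹ * Dᵀ * D = 1 := by rw [Matrix.mul_assoc]; exact hinv1
      have h12 : (Dᵀ * D)⁻¹ * Dᵀ * D'ᵀ = 0 := by rw [Matrix.mul_assoc, hDtD't, Matrix.mul_zero]
      have h21 : (D' * D'ᵀ)⁻¹ * D' * D = 0 := by rw [Matrix.mul_assoc, hD'D, Matrix.mul_zero]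
      have h22 : (D' * D'ᵀ)⁻¹ * D' * D'ᵀ = 1 := by rw [Matrix.mul_assoc]; exact hinv2
      rw [h11, h12, h21, h22, Matrix.fromBlocks_one]
    have hST : Matrix.fromCols D D'ᵀ *
        Matrix.fromRows ((Dᵀ * D)⁻¹ * Dᵀ) ((D' * D'ᵀ)⁻¹ * D') = 1 :=
      (Matrix.fromCols_mul_fromRows_eq_one_comm e D D'ᵀ ((Dᵀ * D)⁻¹ * Dᵀ)
        ((D' * D'ᵀ)⁻¹ * D')).mpr hTS
    rw [Matrix.fromCols_mul_fromRows] at hST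
    rw [hP, hP', ← hST]
    simp only [Matrix.mul_assoc]
  exact ⟨hunit1, hunit2, hPP, hPP', hPPc, hP'Pc, hsum⟩
end

section
/- Let C > 0 and let K : ℝ² × ℝ² → ℂ be a measurable kernel satisfying |K(x,x′)| ≤ C(1 + |x₂ − x₂′|^{−1/2}) for almost every pair (x,x′) with x₂ ≠ x₂′. Let v : ℝ² → ℝ be measurable with ∫_{ℝ²} |v| dx ≤ ε and ess sup_{x₂ ∈ ℝ} ∫_{ℝ} |v(x₁,x₂)| dx₁ ≤ ε, where 6Cε < 1. Then for every χ ∈ L^∞(ℝ², ℂ) there exists a unique m ∈ L^∞(ℝ², ℂ) such that m(x) = χ(x) − ∫_{ℝ²} K(x,x′) v(x′) m(x′) dx′ for almost every x ∈ ℝ²; moreover the integral converges absolutely for almost every x. -/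
open MeasureTheory

section Picard10Aux


lemma pos_piece : ∫⁻ t in Set.Ioc (0:ℝ) 1, ENNReal.ofReal (|t| ^ (-(1/2):ℝ)) ≤ ENNReal.ofReal 2 := by
  have h1 : ∫⁻ t in Set.Ioc (0:ℝ) 1, ENNReal.ofReal (|t| ^ (-(1/2):ℝ))
      = ∫⁻ t in Set.Ioc (0:ℝ) 1, ENNReal.ofReal (t ^ (-(1/2):ℝ)) := by
    apply setLIntegral_congr_fun measurableSet_Ioc
    intro t ht; dsimp only
    rw [abs_of_pos ht.1]
  rw [h1]
  have hint : IntegrableOn (fun t : ℝ => t ^ (-(1/2):ℝ)) (Set.Ioc 0 1) volume := by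
    have := _root_.intervalIntegral.intervalIntegrable_rpow' (a := 0) (b := 1) (r := -(1/2)) (by norm_num)
    rwa [intervalIntegrable_iff, Set.uIoc_of_le (by norm_num : (0:ℝ) ≤ 1)] at this
  rw [← ofReal_integral_eq_lintegral_ofReal hint]
  · apply ENNReal.ofReal_le_ofReal
    have : ∫ t in Set.Ioc (0:ℝ) 1, t ^ (-(1/2):ℝ) = ∫ t in (0:ℝ)..1, t ^ (-(1/2):ℝ) := by
      rw [intervalIntegral.integral_of_le (by norm_num : (0:ℝ) ≤ 1)]
    rw [this, integral_rpow (Or.inl (by norm_num))]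
    norm_num
  · filter_upwards [ae_restrict_mem measurableSet_Ioc] with t ht
    exact Real.rpow_nonneg ht.1.le _

lemma icc_piece : ∫⁻ t in Set.Icc (-1:ℝ) 1, ENNReal.ofReal (|t| ^ (-(1/2):ℝ)) ≤ 4 := by
  have hneg : ∫⁻ t in Set.Ioc (-1:ℝ) 0, ENNReal.ofReal (|t| ^ (-(1/2):ℝ))
      = ∫⁻ t in Set.Ico (0:ℝ) 1, ENNReal.ofReal (|t| ^ (-(1/2):ℝ)) := by
    have hmp : MeasurePreserving (fun t : ℝ => -t) volume volume :=
      Measure.measurePreserving_neg volume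
    have hemb : MeasurableEmbedding (fun t : ℝ => -t) :=
      (MeasurableEquiv.neg ℝ).measurableEmbedding
    have hpre : (fun t : ℝ => -t) ⁻¹' Set.Ico (0:ℝ) 1 = Set.Ioc (-1:ℝ) 0 := by
      ext t; simp only [Set.mem_preimage, Set.mem_Ico, Set.mem_Ioc]
      constructor
      · rintro ⟨h1, h2⟩; constructor <;> linarith
      · rintro ⟨h1, h2⟩; constructor <;> linarith
    have key := hmp.setLIntegral_comp_preimage_emb hemb
      (fun u => ENNReal.ofReal (|u| ^ (-(1/2):ℝ))) (Set.Ico 0 1)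
    rw [hpre] at key
    rw [← key]
    apply setLIntegral_congr_fun measurableSet_Ioc
    intro t ht; dsimp only; rw [abs_neg]
  have hIco : ∫⁻ t in Set.Ico (0:ℝ) 1, ENNReal.ofReal (|t| ^ (-(1/2):ℝ))
      = ∫⁻ t in Set.Ioc (0:ℝ) 1, ENNReal.ofReal (|t| ^ (-(1/2):ℝ)) := by
    rw [MeasureTheory.restrict_Ico_eq_restrict_Ioc]
  have hsub : ∫⁻ t in Set.Icc (-1:ℝ) 1, ENNReal.ofReal (|t| ^ (-(1/2):ℝ))
      ≤ (∫⁻ t in ({-1} : Set ℝ), ENNReal.ofReal (|t| ^ (-(1/2):ℝ)))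
        + ((∫⁻ t in Set.Ioc (-1:ℝ) 0, ENNReal.ofReal (|t| ^ (-(1/2):ℝ)))
        + ∫⁻ t in Set.Ioc (0:ℝ) 1, ENNReal.ofReal (|t| ^ (-(1/2):ℝ))) := by
    refine le_trans (lintegral_mono_set ?_) (le_trans (lintegral_union_le _ _ _)
      (add_le_add le_rfl (lintegral_union_le _ _ _)))
    intro t ht
    rcases eq_or_lt_of_le ht.1 with h | h
    · exact Or.inl (by simp [← h])
    · rcases le_or_gt t 0 with h2 | h2
      · exact Or.inr (Or.inl ⟨h, h2⟩)
      · exact Or.inr (Or.inr ⟨h2, ht.2⟩)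
  have hsing : ∫⁻ t in ({-1} : Set ℝ), ENNReal.ofReal (|t| ^ (-(1/2):ℝ)) = 0 := by
    rw [setLIntegral_measure_zero _ _ Real.volume_singleton]
  have h2 : (ENNReal.ofReal 2) + ENNReal.ofReal 2 ≤ 4 := by
    rw [← ENNReal.ofReal_add (by norm_num) (by norm_num)]
    norm_num
  calc ∫⁻ t in Set.Icc (-1:ℝ) 1, ENNReal.ofReal (|t| ^ (-(1/2):ℝ)) ≤ _ := hsub
    _ ≤ 0 + (ENNReal.ofReal 2 + ENNReal.ofReal 2) := by
        rw [hsing]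
        exact add_le_add le_rfl (add_le_add ((hneg.trans hIco) ▸ pos_piece) pos_piece)
    _ ≤ 4 := by simpa using h2

lemma translate_piece (c : ℝ) :
    ∫⁻ t in {b : ℝ | |c - b| ≤ 1}, ENNReal.ofReal (|c - t| ^ (-(1/2):ℝ)) ≤ 4 := by
  have hmp : MeasurePreserving (fun t : ℝ => c - t) volume volume :=
    Measure.measurePreserving_sub_left volume c
  have hemb : MeasurableEmbedding (fun t : ℝ => c - t) :=
    (MeasurableEquiv.subLeft c).measurableEmbedding
  have hpre : (fun t : ℝ => c - t) ⁻¹' Set.Icc (-1:ℝ) 1 = {b : ℝ | |c - b| ≤ 1} := by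
    ext t
    simp only [Set.mem_preimage, Set.mem_Icc, Set.mem_setOf_eq, abs_le]
  have key := hmp.setLIntegral_comp_preimage_emb hemb
    (fun u => ENNReal.ofReal (|u| ^ (-(1/2):ℝ))) (Set.Icc (-1) 1)
  rw [hpre] at key
  rw [key]
  exact icc_piece

lemma key_bound (C ε : ℝ) (hC : 0 ≤ C) (v : ℝ × ℝ → ℝ) (hv : Measurable v)
    (hv1 : ∫⁻ x, ‖v x‖₊ ∂volume ≤ ENNReal.ofReal ε)
    (hv2 : essSup (fun x₂ : ℝ => ∫⁻ x₁ : ℝ, ‖v (x₁, x₂)‖₊ ∂volume) volume ≤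
      ENNReal.ofReal ε) (c : ℝ) :
    ∫⁻ x' : ℝ × ℝ, ENNReal.ofReal (C * (1 + |c - x'.2| ^ (-(1/2):ℝ))) * ‖v x'‖₊ ∂volume
      ≤ ENNReal.ofReal C * ENNReal.ofReal ε * 6 := by
  set T : Set ℝ := {b : ℝ | |c - b| ≤ 1} with hTdef
  have hT : MeasurableSet T := by
    have : T = (fun b : ℝ => c - b) ⁻¹' Set.Icc (-1:ℝ) 1 := by
      ext t; simp only [hTdef, Set.mem_preimage, Set.mem_Icc, Set.mem_setOf_eq, abs_le]
    rw [this]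
    exact (measurable_const.sub measurable_id) measurableSet_Icc
  set g : ℝ → ENNReal := fun b => ENNReal.ofReal (|c - b| ^ (-(1/2):ℝ)) with hgdef
  have hg : Measurable g := ((measurable_const.sub measurable_id).abs.pow_const _).ennreal_ofReal
  have hptw : ∀ x' : ℝ × ℝ,
      ENNReal.ofReal (C * (1 + |c - x'.2| ^ (-(1/2):ℝ))) * ‖v x'‖₊
      = ENNReal.ofReal C * ((‖v x'‖₊ : ENNReal)
          + T.indicator g x'.2 * ‖v x'‖₊ + Tᶜ.indicator g x'.2 * ‖v x'‖₊) := by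
    intro x'
    have hρ : (0:ℝ) ≤ |c - x'.2| ^ (-(1/2):ℝ) := Real.rpow_nonneg (abs_nonneg _) _
    rw [ENNReal.ofReal_mul hC, ENNReal.ofReal_add zero_le_one hρ, ENNReal.ofReal_one]
    have hsplit : T.indicator g x'.2 + Tᶜ.indicator g x'.2 = g x'.2 := by
      rw [Set.indicator_self_add_compl_apply]
    rw [hgdef] at hsplit
    simp only [hgdef] at hsplit ⊢
    rw [← hsplit]
    ring
  simp only [hptw]
  rw [lintegral_const_mul' _ _ ENNReal.ofReal_ne_top]
  have hm1 : Measurable fun x' : ℝ × ℝ => (‖v x'‖₊ : ENNReal) := hv.nnnorm.coe_nnreal_ennreal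
  have hm2 : Measurable fun x' : ℝ × ℝ => T.indicator g x'.2 * ‖v x'‖₊ :=
    ((hg.indicator hT).comp measurable_snd).mul hv.nnnorm.coe_nnreal_ennreal
  have hm3 : Measurable fun x' : ℝ × ℝ => Tᶜ.indicator g x'.2 * ‖v x'‖₊ :=
    ((hg.indicator hT.compl).comp measurable_snd).mul hv.nnnorm.coe_nnreal_ennreal
  rw [lintegral_add_right _ hm3, lintegral_add_right _ hm2]
  have h3 : ∫⁻ x' : ℝ × ℝ, Tᶜ.indicator g x'.2 * ‖v x'‖₊ ∂volume ≤ ENNReal.ofReal ε := by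
    refine le_trans (lintegral_mono fun x' => ?_) hv1
    have : Tᶜ.indicator g x'.2 ≤ 1 := by
      by_cases hx : x'.2 ∈ Tᶜ
      · rw [Set.indicator_of_mem hx]
        simp only [hgdef]
        rw [show (1 : ENNReal) = ENNReal.ofReal 1 by simp]
        apply ENNReal.ofReal_le_ofReal
        apply Real.rpow_le_one_of_one_le_of_nonpos
        · have : ¬ |c - x'.2| ≤ 1 := hx
          linarith [not_le.mp this]
        · norm_num
      · rw [Set.indicator_of_notMem hx]; exact zero_le_one
    calc Tᶜ.indicator g x'.2 * ‖v x'‖₊ ≤ 1 * ‖v x'‖₊ :=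
          mul_le_mul_left this _
      _ = ‖v x'‖₊ := one_mul _
  have h2 : ∫⁻ x' : ℝ × ℝ, T.indicator g x'.2 * ‖v x'‖₊ ∂volume
      ≤ 4 * ENNReal.ofReal ε := by
    have hmf : AEMeasurable (fun z : ℝ × ℝ => T.indicator g z.2 * (‖v z‖₊ : ENNReal))
        (volume.prod volume) :=
      (Measurable.mul ((hg.indicator hT).comp measurable_snd) hv.nnnorm.coe_nnreal_ennreal).aemeasurable
    rw [Measure.volume_eq_prod, lintegral_prod_symm _ hmf]
    have hF : ∀ b : ℝ, ∫⁻ a : ℝ, T.indicator g b * ‖v (a, b)‖₊ ∂volume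
        = T.indicator g b * ∫⁻ a : ℝ, ‖v (a, b)‖₊ ∂volume := fun b =>
      lintegral_const_mul' _ _ (by
        by_cases hx : b ∈ T
        · rw [Set.indicator_of_mem hx]; exact ENNReal.ofReal_ne_top
        · rw [Set.indicator_of_notMem hx]; exact ENNReal.zero_ne_top)
    simp only [hF]
    have hae : ∀ᵐ b : ℝ ∂volume, (∫⁻ a : ℝ, ‖v (a, b)‖₊ ∂volume) ≤ ENNReal.ofReal ε :=
      (ENNReal.ae_le_essSup _).mono fun b hb => hb.trans hv2
    calc ∫⁻ b : ℝ, T.indicator g b * ∫⁻ a : ℝ, ‖v (a, b)‖₊ ∂volume ∂volume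
        ≤ ∫⁻ b : ℝ, T.indicator g b * ENNReal.ofReal ε ∂volume := by
          refine lintegral_mono_ae (hae.mono fun b hb => ?_)
          exact mul_le_mul_right hb _
      _ = (∫⁻ b : ℝ, T.indicator g b ∂volume) * ENNReal.ofReal ε :=
          lintegral_mul_const' _ _ ENNReal.ofReal_ne_top
      _ ≤ 4 * ENNReal.ofReal ε := by
          apply mul_le_mul_left
          rw [lintegral_indicator hT]
          exact translate_piece c
  refine le_trans (mul_le_mul_right (add_le_add (add_le_add hv1 h2) h3) _)
    (le_of_eq (by ring))

lemma diag_null (c : ℝ) : volume {x' : ℝ × ℝ | x'.2 = c} = 0 := by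
  have : {x' : ℝ × ℝ | x'.2 = c} = (Set.univ : Set ℝ) ×ˢ ({c} : Set ℝ) := by
    ext ⟨a, b⟩; simp [eq_comm]
  rw [this, Measure.volume_eq_prod, Measure.prod_prod, Real.volume_singleton, mul_zero]

lemma kernel_ae (C : ℝ)
    (K : (ℝ × ℝ) → (ℝ × ℝ) → ℂ)
    (hKbd : ∀ᵐ p : (ℝ × ℝ) × (ℝ × ℝ) ∂volume, p.1.2 ≠ p.2.2 →
      ‖K p.1 p.2‖ ≤ C * (1 + |p.1.2 - p.2.2| ^ (-(1 / 2 : ℝ)))) :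
    ∀ᵐ x : ℝ × ℝ ∂volume, ∀ᵐ x' : ℝ × ℝ ∂volume,
      ‖K x x'‖ ≤ C * (1 + |x.2 - x'.2| ^ (-(1 / 2 : ℝ))) := by
  rw [Measure.volume_eq_prod] at hKbd
  refine (Measure.ae_ae_of_ae_prod hKbd).mono fun x hx => ?_
  have hdiag : ∀ᵐ x' : ℝ × ℝ ∂volume, x'.2 ≠ x.2 := by
    refine (ae_iff.2 ?_)
    simpa using diag_null x.2
  filter_upwards [hx, hdiag] with x' h1 h2
  exact h1 fun h => h2 h.symm

lemma main_est (C ε : ℝ) (hC : 0 ≤ C)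
    (K : (ℝ × ℝ) → (ℝ × ℝ) → ℂ) (hK : Measurable (Function.uncurry K))
    (hKbd : ∀ᵐ p : (ℝ × ℝ) × (ℝ × ℝ) ∂volume, p.1.2 ≠ p.2.2 →
      ‖K p.1 p.2‖ ≤ C * (1 + |p.1.2 - p.2.2| ^ (-(1 / 2 : ℝ))))
    (v : ℝ × ℝ → ℝ) (hv : Measurable v)
    (hv1 : ∫⁻ x, ‖v x‖₊ ∂volume ≤ ENNReal.ofReal ε)
    (hv2 : essSup (fun x₂ : ℝ => ∫⁻ x₁ : ℝ, ‖v (x₁, x₂)‖₊ ∂volume) volume ≤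
      ENNReal.ofReal ε)
    (m : ℝ × ℝ → ℂ) (hm : AEStronglyMeasurable m volume)
    (M : ℝ) (hM0 : 0 ≤ M) (hM : ∀ᵐ x' : ℝ × ℝ ∂volume, ‖m x'‖ ≤ M) :
    ∀ᵐ x : ℝ × ℝ ∂volume,
      Integrable (fun x' => K x x' * (v x' : ℂ) * m x') volume ∧
      ‖∫ x', K x x' * (v x' : ℂ) * m x' ∂volume‖ ≤
        (ENNReal.ofReal C * ENNReal.ofReal ε * 6).toReal * M := by
  set κe : ENNReal := ENNReal.ofReal C * ENNReal.ofReal ε * 6 with hκe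
  have hκetop : κe ≠ ⊤ := by
    simp [hκe]
    finiteness
  have hF : AEStronglyMeasurable
      (fun p : (ℝ × ℝ) × (ℝ × ℝ) => K p.1 p.2 * (v p.2 : ℂ) * m p.2)
      ((volume : Measure (ℝ × ℝ)).prod volume) := by
    have h1 : Measurable fun p : (ℝ × ℝ) × (ℝ × ℝ) => K p.1 p.2 := hK
    have h2 : Measurable fun p : (ℝ × ℝ) × (ℝ × ℝ) => (v p.2 : ℂ) :=
      Complex.measurable_ofReal.comp (hv.comp measurable_snd)
    have h3 : AEStronglyMeasurable (fun p : (ℝ × ℝ) × (ℝ × ℝ) => m p.2)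
        ((volume : Measure (ℝ × ℝ)).prod volume) :=
      hm.comp_quasiMeasurePreserving Measure.quasiMeasurePreserving_snd
    exact ((h1.mul h2).aestronglyMeasurable.mul h3)
  have hFae : ∀ᵐ x : ℝ × ℝ ∂volume,
      AEStronglyMeasurable (fun x' => K x x' * (v x' : ℂ) * m x') volume :=
    hF.prodMk_left
  filter_upwards [kernel_ae C K hKbd, hFae] with x hKx hmx
  have hlin : ∫⁻ x', ‖K x x' * (v x' : ℂ) * m x'‖₊ ∂volume ≤ κe * ENNReal.ofReal M := by
    have hptw : ∀ᵐ x' : ℝ × ℝ ∂volume,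
        (‖K x x' * (v x' : ℂ) * m x'‖₊ : ENNReal) ≤
          (ENNReal.ofReal (C * (1 + |x.2 - x'.2| ^ (-(1/2):ℝ))) * ‖v x'‖₊)
            * ENNReal.ofReal M := by
      filter_upwards [hKx, hM] with x' h1 h2
      have e1 : (‖K x x' * (v x' : ℂ) * m x'‖₊ : ENNReal)
          = (‖K x x'‖₊ : ENNReal) * (‖v x'‖₊ : ENNReal) * (‖m x'‖₊ : ENNReal) := by
        simp [nnnorm_mul, ENNReal.coe_mul]
      rw [e1]
      refine mul_le_mul' (mul_le_mul' ?_ le_rfl) ?_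
      · rw [← enorm_eq_nnnorm, ← ofReal_norm]
        exact ENNReal.ofReal_le_ofReal h1
      · rw [← enorm_eq_nnnorm, ← ofReal_norm]
        exact ENNReal.ofReal_le_ofReal h2
    calc ∫⁻ x', ‖K x x' * (v x' : ℂ) * m x'‖₊ ∂volume
        ≤ ∫⁻ x', (ENNReal.ofReal (C * (1 + |x.2 - x'.2| ^ (-(1/2):ℝ))) * ‖v x'‖₊)
            * ENNReal.ofReal M ∂volume := lintegral_mono_ae hptw
      _ = (∫⁻ x', ENNReal.ofReal (C * (1 + |x.2 - x'.2| ^ (-(1/2):ℝ))) * ‖v x'‖₊ ∂volume)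
            * ENNReal.ofReal M := lintegral_mul_const' _ _ ENNReal.ofReal_ne_top
      _ ≤ κe * ENNReal.ofReal M := by
          exact mul_le_mul_left (key_bound C ε hC v hv hv1 hv2 x.2) _
  have hfin : κe * ENNReal.ofReal M ≠ ⊤ := by finiteness
  have hintg : Integrable (fun x' => K x x' * (v x' : ℂ) * m x') volume :=
    ⟨hmx, lt_of_le_of_lt hlin (lt_top_iff_ne_top.2 hfin)⟩
  refine ⟨hintg, ?_⟩
  calc ‖∫ x', K x x' * (v x' : ℂ) * m x' ∂volume‖
      ≤ (∫⁻ x', ENNReal.ofReal ‖K x x' * (v x' : ℂ) * m x'‖ ∂volume).toReal :=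
        norm_integral_le_lintegral_norm _
    _ ≤ (κe * ENNReal.ofReal M).toReal := by
        apply ENNReal.toReal_mono hfin
        calc ∫⁻ x', ENNReal.ofReal ‖K x x' * (v x' : ℂ) * m x'‖ ∂volume
            = ∫⁻ x', (‖K x x' * (v x' : ℂ) * m x'‖₊ : ENNReal) ∂volume := by
              simp only [ofReal_norm, enorm_eq_nnnorm]
          _ ≤ κe * ENNReal.ofReal M := hlin
    _ = κe.toReal * M := by
        rw [ENNReal.toReal_mul, ENNReal.toReal_ofReal hM0]

lemma aesm_integral
    (K : (ℝ × ℝ) → (ℝ × ℝ) → ℂ) (hK : Measurable (Function.uncurry K))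
    (v : ℝ × ℝ → ℝ) (hv : Measurable v)
    (f : ℝ × ℝ → ℂ) (hf : AEStronglyMeasurable f (volume : Measure (ℝ × ℝ))) :
    AEStronglyMeasurable
      (fun x : ℝ × ℝ => ∫ x', K x x' * (v x' : ℂ) * f x' ∂volume) volume := by
  have hF : AEStronglyMeasurable
      (fun p : (ℝ × ℝ) × (ℝ × ℝ) => K p.1 p.2 * (v p.2 : ℂ) * f p.2)
      ((volume : Measure (ℝ × ℝ)).prod volume) := by
    have h1 : Measurable fun p : (ℝ × ℝ) × (ℝ × ℝ) => K p.1 p.2 := hK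
    have h2 : Measurable fun p : (ℝ × ℝ) × (ℝ × ℝ) => (v p.2 : ℂ) :=
      Complex.measurable_ofReal.comp (hv.comp measurable_snd)
    have h3 : AEStronglyMeasurable (fun p : (ℝ × ℝ) × (ℝ × ℝ) => f p.2)
        ((volume : Measure (ℝ × ℝ)).prod volume) :=
      hf.comp_quasiMeasurePreserving Measure.quasiMeasurePreserving_snd
    exact ((h1.mul h2).aestronglyMeasurable.mul h3)
  exact hF.integral_prod_right'

lemma ae_bound_of_memtop {α E : Type*} [MeasurableSpace α] {μ : Measure α}
    [NormedAddCommGroup E] {f : α → E} (hf : MemLp f ⊤ μ) :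
    ∀ᵐ x ∂μ, ‖f x‖ ≤ (eLpNormEssSup f μ).toReal := by
  have htop : eLpNormEssSup f μ ≠ ⊤ := by
    have := hf.2
    rw [eLpNorm_exponent_top] at this
    exact this.ne
  filter_upwards [ae_le_eLpNormEssSup (f := f) (μ := μ)] with x hx
  have := ENNReal.toReal_mono htop hx
  simpa using this

end Picard10Aux

/-- **Picard solvability of the eigenfunction integral equation.**
Let `C > 0` and let `K : ℝ² × ℝ² → ℂ` be a measurable kernel with
`|K(x,x′)| ≤ C(1 + |x₂ − x₂′|^{−1/2})` for a.e. `(x,x′)` with `x₂ ≠ x₂′`.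
Let `v : ℝ² → ℝ` be measurable with `∫|v| ≤ ε` and `ess sup_{x₂} ∫|v(x₁,x₂)|dx₁ ≤ ε`,
where `6Cε < 1`. Then for every `χ ∈ L^∞(ℝ²,ℂ)` there is an `m ∈ L^∞(ℝ²,ℂ)`,
unique up to a.e. equality, with `m(x) = χ(x) − ∫ K(x,x′)v(x′)m(x′)dx′` for a.e. `x`,
the integral converging absolutely for a.e. `x`. -/
theorem picard_solvability (C ε : ℝ) (hC : 0 < C) (hε : 6 * C * ε < 1)
    (K : (ℝ × ℝ) → (ℝ × ℝ) → ℂ) (hK : Measurable (Function.uncurry K))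
    (hKbd : ∀ᵐ p : (ℝ × ℝ) × (ℝ × ℝ) ∂volume, p.1.2 ≠ p.2.2 →
      ‖K p.1 p.2‖ ≤ C * (1 + |p.1.2 - p.2.2| ^ (-(1 / 2 : ℝ))))
    (v : ℝ × ℝ → ℝ) (hv : Measurable v)
    (hv1 : ∫⁻ x, ‖v x‖₊ ∂volume ≤ ENNReal.ofReal ε)
    (hv2 : essSup (fun x₂ : ℝ => ∫⁻ x₁ : ℝ, ‖v (x₁, x₂)‖₊ ∂volume) volume ≤
      ENNReal.ofReal ε)
    (χ : ℝ × ℝ → ℂ) (hχ : MemLp χ ⊤ volume) :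
    (∃ m : ℝ × ℝ → ℂ, MemLp m ⊤ volume ∧
      ∀ᵐ x ∂(volume : Measure (ℝ × ℝ)),
        Integrable (fun x' => K x x' * (v x' : ℂ) * m x') volume ∧
        m x = χ x - ∫ x', K x x' * (v x' : ℂ) * m x' ∂volume) ∧
    ∀ m₁ m₂ : ℝ × ℝ → ℂ,
      (MemLp m₁ ⊤ volume ∧ ∀ᵐ x ∂(volume : Measure (ℝ × ℝ)),
        Integrable (fun x' => K x x' * (v x' : ℂ) * m₁ x') volume ∧
        m₁ x = χ x - ∫ x', K x x' * (v x' : ℂ) * m₁ x' ∂volume) →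
      (MemLp m₂ ⊤ volume ∧ ∀ᵐ x ∂(volume : Measure (ℝ × ℝ)),
        Integrable (fun x' => K x x' * (v x' : ℂ) * m₂ x') volume ∧
        m₂ x = χ x - ∫ x', K x x' * (v x' : ℂ) * m₂ x' ∂volume) →
      m₁ =ᵐ[volume] m₂ := by
  have hC0 : (0:ℝ) ≤ C := hC.le
  set κ : ℝ := (ENNReal.ofReal C * ENNReal.ofReal ε * 6).toReal with hκdef
  have hκ0 : 0 ≤ κ := ENNReal.toReal_nonneg
  have hκ1 : κ < 1 := by
    rcases le_or_gt 0 ε with h | h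
    · have : κ = C * ε * 6 := by
        rw [hκdef, ENNReal.toReal_mul, ENNReal.toReal_mul,
          ENNReal.toReal_ofReal hC0, ENNReal.toReal_ofReal h]
        norm_num
      rw [this]; linarith
    · have : κ = 0 := by
        rw [hκdef, ENNReal.ofReal_eq_zero.2 h.le]
        simp
      rw [this]; norm_num
  -- the bound for χ
  set Mχ : ℝ := (eLpNormEssSup χ volume).toReal with hMχdef
  have hχb : ∀ᵐ x : ℝ × ℝ ∂volume, ‖χ x‖ ≤ Mχ := ae_bound_of_memtop hχ
  -- membership of the transformed function
  have hTmem : ∀ (f : ℝ × ℝ → ℂ), AEStronglyMeasurable f volume → ∀ M : ℝ, 0 ≤ M →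
      (∀ᵐ x' : ℝ × ℝ ∂volume, ‖f x'‖ ≤ M) →
      MemLp (fun x => χ x - ∫ x', K x x' * (v x' : ℂ) * f x' ∂volume) ⊤ volume := by
    intro f hf M hM0 hM
    refine memLp_top_of_bound (hχ.1.sub (aesm_integral K hK v hv f hf)) (Mχ + κ * M) ?_
    filter_upwards [hχb, main_est C ε hC0 K hK hKbd v hv hv1 hv2 f hf M hM0 hM]
      with x h1 h2
    calc ‖χ x - ∫ x', K x x' * (v x' : ℂ) * f x' ∂volume‖
        ≤ ‖χ x‖ + ‖∫ x', K x x' * (v x' : ℂ) * f x' ∂volume‖ := norm_sub_le _ _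
      _ ≤ Mχ + κ * M := add_le_add h1 h2.2
  -- bound coming from the L∞ norm of an Lp element
  have hmbd : ∀ m : Lp ℂ ⊤ (volume : Measure (ℝ × ℝ)),
      ∀ᵐ x : ℝ × ℝ ∂volume, ‖m x‖ ≤ ‖m‖ := by
    intro m
    have := ae_bound_of_memtop (Lp.memLp m)
    rw [show (eLpNormEssSup (⇑m) volume).toReal = ‖m‖ by
      rw [Lp.norm_def, eLpNorm_exponent_top]] at this
    exact this
  -- the Picard operator
  set T : Lp ℂ ⊤ (volume : Measure (ℝ × ℝ)) → Lp ℂ ⊤ (volume : Measure (ℝ × ℝ)) :=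
    fun m => MemLp.toLp _
      (hTmem (⇑m) (Lp.aestronglyMeasurable m) ‖m‖ (norm_nonneg m) (hmbd m)) with hTdef
  have hTcoe : ∀ m : Lp ℂ ⊤ (volume : Measure (ℝ × ℝ)),
      ⇑(T m) =ᵐ[volume] fun x => χ x - ∫ x', K x x' * (v x' : ℂ) * m x' ∂volume :=
    fun m => MemLp.coeFn_toLp _
  -- contraction estimate
  have hdistb : ∀ m₁ m₂ : Lp ℂ ⊤ (volume : Measure (ℝ × ℝ)),
      dist (T m₁) (T m₂) ≤ κ * dist m₁ m₂ := by
    intro m₁ m₂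
    have hdb : ∀ᵐ x : ℝ × ℝ ∂volume, ‖(⇑m₁ - ⇑m₂) x‖ ≤ dist m₁ m₂ := by
      filter_upwards [hmbd (m₁ - m₂), Lp.coeFn_sub m₁ m₂] with x hx he
      rw [← he]
      rw [dist_eq_norm]
      exact hx
    have hdsm : AEStronglyMeasurable (⇑m₁ - ⇑m₂) (volume : Measure (ℝ × ℝ)) :=
      (Lp.aestronglyMeasurable m₁).sub (Lp.aestronglyMeasurable m₂)
    have hb := main_est C ε hC0 K hK hKbd v hv hv1 hv2 (⇑m₁ - ⇑m₂) hdsm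
      (dist m₁ m₂) dist_nonneg hdb
    have hb1 := main_est C ε hC0 K hK hKbd v hv hv1 hv2 (⇑m₁)
      (Lp.aestronglyMeasurable m₁) ‖m₁‖ (norm_nonneg m₁) (hmbd m₁)
    have hb2 := main_est C ε hC0 K hK hKbd v hv hv1 hv2 (⇑m₂)
      (Lp.aestronglyMeasurable m₂) ‖m₂‖ (norm_nonneg m₂) (hmbd m₂)
    have hae : ∀ᵐ x : ℝ × ℝ ∂volume, ‖(⇑(T m₁ - T m₂)) x‖ ≤ κ * dist m₁ m₂ := by
      filter_upwards [Lp.coeFn_sub (T m₁) (T m₂), hTcoe m₁, hTcoe m₂, hb, hb1, hb2]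
        with x hsub h1 h2 hbx h1x h2x
      rw [hsub]
      simp only [Pi.sub_apply]
      rw [h1, h2]
      have heq : (χ x - ∫ x', K x x' * (v x' : ℂ) * m₁ x' ∂volume)
          - (χ x - ∫ x', K x x' * (v x' : ℂ) * m₂ x' ∂volume)
          = -(∫ x', K x x' * (v x' : ℂ) * ((⇑m₁ - ⇑m₂) x') ∂volume) := by
        have hsubint : ∫ x', K x x' * (v x' : ℂ) * ((⇑m₁ - ⇑m₂) x') ∂volume
            = (∫ x', K x x' * (v x' : ℂ) * m₁ x' ∂volume)
              - ∫ x', K x x' * (v x' : ℂ) * m₂ x' ∂volume := by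
          rw [← integral_sub h1x.1 h2x.1]
          congr 1
          ext x'
          simp only [Pi.sub_apply]
          ring
        rw [hsubint]
        ring
      rw [heq, norm_neg]
      exact hbx.2
    rw [dist_eq_norm, Lp.norm_def, eLpNorm_exponent_top]
    have hle := eLpNormEssSup_le_of_ae_bound hae
    calc (eLpNormEssSup (⇑(T m₁ - T m₂)) volume).toReal
        ≤ (ENNReal.ofReal (κ * dist m₁ m₂)).toReal :=
          ENNReal.toReal_mono ENNReal.ofReal_ne_top hle
      _ = κ * dist m₁ m₂ := ENNReal.toReal_ofReal (mul_nonneg hκ0 dist_nonneg)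
  have hcontr : ContractingWith κ.toNNReal T := by
    refine ⟨?_, LipschitzWith.of_dist_le_mul fun m₁ m₂ => ?_⟩
    · exact_mod_cast Real.toNNReal_lt_one.2 hκ1
    · rw [Real.coe_toNNReal κ hκ0]
      exact hdistb m₁ m₂
  constructor
  · -- existence via the fixed point
    set mf := ContractingWith.fixedPoint T hcontr with hmfdef
    have hfix : T mf = mf := hcontr.fixedPoint_isFixedPt
    refine ⟨⇑mf, Lp.memLp mf, ?_⟩
    have h1 : ⇑(T mf) =ᵐ[volume]
        fun x => χ x - ∫ x', K x x' * (v x' : ℂ) * mf x' ∂volume := hTcoe mf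
    rw [hfix] at h1
    filter_upwards [h1, main_est C ε hC0 K hK hKbd v hv hv1 hv2 (⇑mf)
      (Lp.aestronglyMeasurable mf) ‖mf‖ (norm_nonneg mf) (hmbd mf)] with x hx hbx
    exact ⟨hbx.1, hx⟩
  · -- uniqueness
    rintro m₁ m₂ ⟨hm₁L, hm₁⟩ ⟨hm₂L, hm₂⟩
    set d : ℝ × ℝ → ℂ := m₁ - m₂ with hddef
    have hdL : MemLp d ⊤ (volume : Measure (ℝ × ℝ)) := hm₁L.sub hm₂L
    set Md : ℝ := (eLpNormEssSup d volume).toReal with hMddef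
    have hMd0 : 0 ≤ Md := ENNReal.toReal_nonneg
    have hdb : ∀ᵐ x : ℝ × ℝ ∂volume, ‖d x‖ ≤ Md := ae_bound_of_memtop hdL
    have hb := main_est C ε hC0 K hK hKbd v hv hv1 hv2 d hdL.1 Md hMd0 hdb
    have hae : ∀ᵐ x : ℝ × ℝ ∂volume, ‖d x‖ ≤ κ * Md := by
      filter_upwards [hm₁, hm₂, hb] with x h1 h2 hbx
      have heq : d x = -(∫ x', K x x' * (v x' : ℂ) * d x' ∂volume) := by
        have hsubint : ∫ x', K x x' * (v x' : ℂ) * d x' ∂volume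
            = (∫ x', K x x' * (v x' : ℂ) * m₁ x' ∂volume)
              - ∫ x', K x x' * (v x' : ℂ) * m₂ x' ∂volume := by
          rw [← integral_sub h1.1 h2.1]
          congr 1
          ext x'
          simp only [hddef, Pi.sub_apply]
          ring
        rw [hsubint]
        simp only [hddef, Pi.sub_apply]
        rw [h1.2, h2.2]
        ring
      rw [heq, norm_neg]
      exact hbx.2
    have hMdle : Md ≤ κ * Md := by
      have hle := eLpNormEssSup_le_of_ae_bound hae
      have htop : eLpNormEssSup d volume ≠ ⊤ := by
        have := hdL.2
        rw [eLpNorm_exponent_top] at this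
        exact this.ne
      calc Md = (eLpNormEssSup d volume).toReal := hMddef
        _ ≤ (ENNReal.ofReal (κ * Md)).toReal :=
            ENNReal.toReal_mono ENNReal.ofReal_ne_top hle
        _ = κ * Md := ENNReal.toReal_ofReal (mul_nonneg hκ0 hMd0)
    have hMd : Md = 0 := by
      by_contra h
      have hpos : 0 < Md := lt_of_le_of_ne hMd0 (Ne.symm h)
      nlinarith
    have hzero : eLpNormEssSup d volume = 0 := by
      have htop : eLpNormEssSup d volume ≠ ⊤ := by
        have := hdL.2
        rw [eLpNorm_exponent_top] at this
        exact this.ne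
      rw [hMddef] at hMd
      exact ((ENNReal.toReal_eq_zero_iff _).1 hMd).resolve_right htop
    have hd0 : d =ᵐ[volume] 0 := by
      have : eLpNorm d ⊤ volume = 0 := by
        rw [eLpNorm_exponent_top]; exact hzero
      exact (eLpNorm_eq_zero_iff hdL.1 (by simp)).1 this
    filter_upwards [hd0] with x hx
    have h0 : m₁ x - m₂ x = 0 := hx
    exact sub_eq_zero.1 h0
end
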